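/- Let (c_p)_{p∈ℕ} be a sequence of positive reals that is regularly varying with index ω (i.e., c_{⌊λp⌋}/c_p → λ^ω for all λ > 0). Then there exists a sequence (b_p) of positive reals with b_p/c_p → 1 and b_{p+1}/b_p = 1 + ω/p + o(1/p) as p → ∞ (Bojanic–Seneta). -/

import Mathlib

open Filter

open MeasureTheory Set
open scoped ENNReal

lemma bs_exists_good (E : Set ℝ)
    (hvol : volume (Set.Icc (2:ℝ) 10 \ E) ≤ ENNReal.ofReal (1/20))
    (p m : ℕ) (hp : 100 ≤ p) (hm1 : p ≤ m) (hm2 : m ≤ 2*p) :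
    ∃ q : ℕ, p/4 + 1 ≤ q ∧ q ≤ p/2 ∧
      (Set.Ico ((m:ℝ)/q) ((m+1:ℝ)/q) ∩ E).Nonempty ∧
      (Set.Ico ((p:ℝ)/q) ((p+1:ℝ)/q) ∩ E).Nonempty := by
  classical
  set q0 : ℕ := p/4 + 1 with hq0def
  set q1 : ℕ := p/2 with hq1def
  set B : ℕ → Finset ℕ := fun n =>
    (Finset.Icc q0 q1).filter (fun q => Set.Ico ((n:ℝ)/q) ((n+1:ℝ)/q) ∩ E = ∅) with hBdef
  have count : ∀ n : ℕ, p ≤ n → n ≤ 2*p → 20 * (B n).card ≤ q1 := by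
    intro n hn1 hn2
    have hIsub : ∀ q ∈ B n, Set.Ico ((n:ℝ)/q) ((n+1:ℝ)/q) ⊆ Set.Icc (2:ℝ) 10 \ E := by
      intro q hq x hx
      simp only [hBdef, Finset.mem_filter, Finset.mem_Icc] at hq
      obtain ⟨⟨hqa, hqb⟩, hqE⟩ := hq
      have hqpos : (0:ℝ) < q := by
        have : 0 < q := by omega
        exact_mod_cast this
      constructor
      · constructor
        · calc (2:ℝ) ≤ (n:ℝ)/q := by
                rw [le_div_iff₀ hqpos]
                have : 2*q ≤ n := by omega
                exact_mod_cast this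
            _ ≤ x := hx.1
        · have h10 : ((n:ℝ)+1)/q ≤ 10 := by
            rw [div_le_iff₀ hqpos]
            have : n + 1 ≤ 10*q := by omega
            calc ((n:ℝ)+1) = ((n+1 : ℕ) : ℝ) := by push_cast; ring
              _ ≤ ((10*q : ℕ) : ℝ) := by exact_mod_cast this
              _ = 10*(q:ℝ) := by push_cast; ring
          exact le_trans hx.2.le h10
      · intro hxE
        exact absurd (Set.mem_inter hx hxE) (by rw [hqE]; exact Set.notMem_empty x)
    have hdisj : ((B n : Finset ℕ) : Set ℕ).PairwiseDisjoint
        (fun q : ℕ => Set.Ico ((n:ℝ)/q) ((n+1:ℝ)/q)) := by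
      intro q hq q' hq' hne
      simp only [Finset.coe_filter, Set.mem_setOf_eq, Finset.mem_Icc, hBdef] at hq hq'
      have key : ∀ a b : ℕ, q0 ≤ a → a ≤ q1 → q0 ≤ b → b ≤ q1 → a < b →
          Disjoint (Set.Ico ((n:ℝ)/b) ((n+1:ℝ)/b)) (Set.Ico ((n:ℝ)/a) ((n+1:ℝ)/a)) := by
        intro a b ha1 ha2 hb1 hb2 hab
        have hapos : (0:ℝ) < a := by exact_mod_cast (by omega : 0 < a)
        have hbpos : (0:ℝ) < b := by exact_mod_cast (by omega : 0 < b)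
        rw [Set.Ico_disjoint_Ico]
        have : ((n:ℝ)+1)/b ≤ (n:ℝ)/a := by
          rw [div_le_div_iff₀ hbpos hapos]
          have : (n+1)*a ≤ n*b := by nlinarith [hn1, hm2, ha1, ha2, hb1, hb2, hab,
            (by omega : a + 1 ≤ b), (by omega : a ≤ n)]
          calc ((n:ℝ)+1)*a = (((n+1)*a : ℕ) : ℝ) := by push_cast; ring
            _ ≤ ((n*b : ℕ) : ℝ) := by exact_mod_cast this
            _ = (n:ℝ)*b := by push_cast; ring
        calc min (((n:ℝ)+1)/b) (((n:ℝ)+1)/a) ≤ ((n:ℝ)+1)/b := min_le_left _ _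
          _ ≤ (n:ℝ)/a := this
          _ ≤ max ((n:ℝ)/b) ((n:ℝ)/a) := le_max_right _ _
      rcases lt_or_gt_of_ne hne with h | h
      · exact (key q q' hq.1.1 hq.1.2 hq'.1.1 hq'.1.2 h).symm
      · exact key q' q hq'.1.1 hq'.1.2 hq.1.1 hq.1.2 h
    -- measure of the union
    have hmeas : ∀ q ∈ B n, MeasurableSet (Set.Ico ((n:ℝ)/q) ((n+1:ℝ)/q)) :=
      fun q _ => measurableSet_Ico
    have hunion : volume (⋃ q ∈ B n, Set.Ico ((n:ℝ)/q) ((n+1:ℝ)/q))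
        = ∑ q ∈ B n, volume (Set.Ico ((n:ℝ)/q) ((n+1:ℝ)/q)) :=
      measure_biUnion_finset hdisj hmeas
    have hsub : (⋃ q ∈ B n, Set.Ico ((n:ℝ)/q) ((n+1:ℝ)/q)) ⊆ Set.Icc (2:ℝ) 10 \ E :=
      Set.iUnion₂_subset hIsub
    have hle : ∑ q ∈ B n, volume (Set.Ico ((n:ℝ)/q) ((n+1:ℝ)/q)) ≤ ENNReal.ofReal (1/20) :=
      hunion ▸ le_trans (measure_mono hsub) hvol
    have hterm : ∀ q ∈ B n, ENNReal.ofReal (1/(q1:ℝ)) ≤ volume (Set.Ico ((n:ℝ)/q) ((n+1:ℝ)/q)) := by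
      intro q hq
      simp only [hBdef, Finset.mem_filter, Finset.mem_Icc] at hq
      have hq1 : 0 < q := by omega
      have hqpos : (0:ℝ) < q := by exact_mod_cast hq1
      rw [Real.volume_Ico]
      apply ENNReal.ofReal_le_ofReal
      have : ((n:ℝ)+1)/q - (n:ℝ)/q = 1/q := by field_simp; ring
      rw [this]
      apply one_div_le_one_div_of_le hqpos
      exact_mod_cast hq.1.2
    have hsum_ge : (B n).card • ENNReal.ofReal (1/(q1:ℝ))
        ≤ ∑ q ∈ B n, volume (Set.Ico ((n:ℝ)/q) ((n+1:ℝ)/q)) :=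
      Finset.card_nsmul_le_sum _ _ _ hterm
    have hcard : ((B n).card : ℝ≥0∞) * ENNReal.ofReal (1/(q1:ℝ)) ≤ ENNReal.ofReal (1/20) := by
      calc ((B n).card : ℝ≥0∞) * ENNReal.ofReal (1/(q1:ℝ))
          = (B n).card • ENNReal.ofReal (1/(q1:ℝ)) := by rw [nsmul_eq_mul]
        _ ≤ _ := le_trans hsum_ge hle
    have hq1pos : (0:ℝ) < q1 := by exact_mod_cast (by omega : 0 < q1)
    have hreal : ((B n).card : ℝ) * (1/(q1:ℝ)) ≤ 1/20 := by
      have := hcard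
      rw [show ((B n).card : ℝ≥0∞) = ENNReal.ofReal ((B n).card : ℝ) by
            rw [ENNReal.ofReal_natCast],
          ← ENNReal.ofReal_mul (by positivity)] at this
      exact (ENNReal.ofReal_le_ofReal_iff (by norm_num)).mp this
    have h20 : ((20 * (B n).card : ℕ) : ℝ) ≤ (q1:ℝ) := by
      rw [mul_one_div, div_le_div_iff₀ hq1pos (by norm_num : (0:ℝ) < 20)] at hreal
      push_cast
      linarith
    exact_mod_cast h20
  -- choose a good q
  have hcards : (B m).card + (B p).card < (Finset.Icc q0 q1).card := by
    have h1 := count m hm1 hm2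
    have h2 := count p le_rfl (by omega)
    rw [Nat.card_Icc]
    omega
  have : ¬ (Finset.Icc q0 q1 ⊆ B m ∪ B p) := by
    intro hsub
    have := Finset.card_le_card hsub
    have := Finset.card_union_le (B m) (B p)
    omega
  rw [Finset.not_subset] at this
  obtain ⟨q, hqIcc, hqnot⟩ := this
  simp only [Finset.mem_union, not_or] at hqnot
  simp only [Finset.mem_Icc] at hqIcc
  refine ⟨q, hqIcc.1, hqIcc.2, ?_, ?_⟩
  · rw [Set.nonempty_iff_ne_empty]
    intro h
    apply hqnot.1
    simp only [hBdef, Finset.mem_filter, Finset.mem_Icc]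
    exact ⟨hqIcc, h⟩
  · rw [Set.nonempty_iff_ne_empty]
    intro h
    apply hqnot.2
    simp only [hBdef, Finset.mem_filter, Finset.mem_Icc]
    exact ⟨hqIcc, h⟩

set_option maxHeartbeats 2000000 in
/-- Uniform convergence theorem for the slowly varying part, on ratio range `[1,2]`. -/
lemma bs_uct (c : ℕ → ℝ) (hc : ∀ p : ℕ, 1 ≤ p → 0 < c p) (ω : ℝ)
    (hrv : ∀ l : ℝ, 0 < l →
      Tendsto (fun p : ℕ => c ⌊l * p⌋₊ / c p) atTop (nhds (l ^ ω))) :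
    ∀ ε : ℝ, 0 < ε → ∃ N : ℕ, 1 ≤ N ∧ ∀ p, N ≤ p → ∀ m, p ≤ m → m ≤ 2*p →
      |(Real.log (c m) - ω * Real.log m) - (Real.log (c p) - ω * Real.log p)| ≤ ε := by
  set G : ℝ → ℝ := fun l => Real.exp (ω * Real.log l) with hGdef
  set F : ℕ → ℝ → ℝ := fun p l => c ⌊l * (p:ℝ)⌋₊ / c p with hFdef
  have hFmeas : ∀ p : ℕ, StronglyMeasurable (F p) := by
    intro p
    apply Measurable.stronglyMeasurable
    have h1 : Measurable fun l : ℝ => l * (p:ℝ) := measurable_mul_const _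
    have h2 : Measurable fun n : ℕ => c n / c p := measurable_from_top
    exact h2.comp (Nat.measurable_floor.comp h1)
  have hGmeas : StronglyMeasurable G :=
    ((Real.measurable_log.const_mul ω).exp).stronglyMeasurable
  have hS : MeasurableSet (Set.Icc (2:ℝ) 10) := measurableSet_Icc
  have hSfin : volume (Set.Icc (2:ℝ) 10) ≠ ⊤ := by
    rw [Real.volume_Icc]; exact ENNReal.ofReal_ne_top
  have hptwise : ∀ᵐ x, x ∈ Set.Icc (2:ℝ) 10 →
      Tendsto (fun p : ℕ => F p x) atTop (nhds (G x)) := by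
    apply ae_of_all
    intro x hx
    have hxpos : (0:ℝ) < x := lt_of_lt_of_le two_pos hx.1
    have h := hrv x hxpos
    have hGx : G x = x ^ ω := by
      rw [hGdef]; simp only []; rw [Real.rpow_def_of_pos hxpos, mul_comm]
    rw [hGx]
    exact h
  obtain ⟨t, htsub, htm, htvol, htu⟩ :=
    MeasureTheory.tendstoUniformlyOn_of_ae_tendsto hFmeas hGmeas hS hSfin hptwise
      (by norm_num : (0:ℝ) < 1/20)
  set E := Set.Icc (2:ℝ) 10 \ t with hEdef
  have hvolE : volume (Set.Icc (2:ℝ) 10 \ E) ≤ ENNReal.ofReal (1/20) := by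
    refine le_trans (measure_mono ?_) htvol
    intro x hx
    rw [hEdef] at hx
    by_contra hxt
    exact hx.2 ⟨hx.1, hxt⟩
  intro ε hε
  -- the lower bound β for ν ^ ω on [2,10]
  set β : ℝ := min ((2:ℝ) ^ ω) ((10:ℝ) ^ ω) with hβdef
  have hβpos : 0 < β :=
    lt_min (Real.rpow_pos_of_pos (by norm_num) ω) (Real.rpow_pos_of_pos (by norm_num) ω)
  have hβν : ∀ ν : ℝ, 2 ≤ ν → ν ≤ 10 → β ≤ ν ^ ω := by
    intro ν h2 h10
    rcases le_or_gt 0 ω with hω | hω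
    · exact le_trans (min_le_left _ _) (Real.rpow_le_rpow (by norm_num) h2 hω)
    · exact le_trans (min_le_right _ _) (Real.rpow_le_rpow_of_nonpos (by linarith) h10 hω.le)
  set ε' : ℝ := min (β/2) (ε*β/16) with hε'def
  have hε'pos : 0 < ε' := lt_min (by positivity) (by positivity)
  obtain ⟨N₁, hN₁⟩ := eventually_atTop.mp (Metric.tendstoUniformlyOn_iff.mp htu ε' hε'pos)
  refine ⟨max (max (4*N₁) 100) (Nat.ceil (4*(|ω|+1)/ε)) + 1, by omega, ?_⟩
  intro p hp m hm1 hm2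
  have hp100 : 100 ≤ p := by omega
  have hp4N : 4*N₁ ≤ p := by omega
  have hpε : 4*(|ω|+1)/ε ≤ (p:ℝ) := by
    have h1 : Nat.ceil (4*(|ω|+1)/ε) ≤ p := by omega
    exact le_trans (Nat.le_ceil _) (by exact_mod_cast h1)
  obtain ⟨q, hq0, hq1, ⟨νm, hνm⟩, ⟨νp, hνp⟩⟩ := bs_exists_good E hvolE p m hp100 hm1 hm2
  have hqN₁ : N₁ ≤ q := by
    have : N₁ ≤ p/4 := by omega
    omega
  have hqnat : 1 ≤ q := by omega
  have hqr : (0:ℝ) < q := by exact_mod_cast (by omega : 0 < q)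
  have hcq : 0 < c q := hc q hqnat
  have hppos : (0:ℝ) < p := by exact_mod_cast (by omega : 0 < p)
  -- main estimate for one target n
  have key : ∀ (n : ℕ) (ν : ℝ), p ≤ n → n ≤ 2*p →
      ν ∈ Set.Ico ((n:ℝ)/q) ((n+1:ℝ)/q) → ν ∈ E →
      |Real.log (c n) - Real.log (c q) - ω * (Real.log n - Real.log q)|
        ≤ 2*ε'/β + |ω| * (1/p) := by
    intro n ν hn1 hn2 hνI hνE
    have hnnat : 1 ≤ n := by omega
    have hnr : (0:ℝ) < n := by exact_mod_cast (by omega : 0 < n)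
    have hcn : 0 < c n := hc n hnnat
    have hν2 : (2:ℝ) ≤ ν := by
      refine le_trans ?_ hνI.1
      rw [le_div_iff₀ hqr]
      have h2q : 2*q ≤ n := by omega
      calc (2:ℝ)*q = ((2*q : ℕ) : ℝ) := by push_cast; ring
        _ ≤ n := by exact_mod_cast h2q
    have hν10 : ν < 10 := by
      refine lt_of_lt_of_le hνI.2 ?_
      rw [div_le_iff₀ hqr]
      have h10q : n + 1 ≤ 10*q := by omega
      calc ((n:ℝ)+1) = ((n+1 : ℕ) : ℝ) := by push_cast; ring
        _ ≤ ((10*q : ℕ) : ℝ) := by exact_mod_cast h10q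
        _ = 10*(q:ℝ) := by push_cast; ring
    have hνpos : 0 < ν := by linarith
    have hfloor : ⌊ν * (q:ℝ)⌋₊ = n := by
      rw [Nat.floor_eq_iff (by positivity)]
      constructor
      · calc (n:ℝ) = ((n:ℝ)/q)*q := by field_simp
          _ ≤ ν*q := mul_le_mul_of_nonneg_right hνI.1 hqr.le
      · calc ν*(q:ℝ) < (((n:ℝ)+1)/q)*q := by exact mul_lt_mul_of_pos_right hνI.2 hqr
          _ = (n:ℝ)+1 := by field_simp
    have hdist := hN₁ q hqN₁ ν hνE
    set X := c n / c q with hXdef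
    have hXpos : 0 < X := div_pos hcn hcq
    have hXY : |ν^ω - X| < ε' := by
      rw [Real.dist_eq] at hdist
      have hGν : G ν = ν ^ ω := by
        rw [hGdef]; simp only []; rw [Real.rpow_def_of_pos hνpos, mul_comm]
      have hFν : F q ν = X := by
        rw [hFdef]; simp only []; rw [hfloor, hXdef]
      rwa [hGν, hFν] at hdist
    have hY : β ≤ ν^ω := hβν ν hν2 hν10.le
    have hYpos : 0 < ν^ω := Real.rpow_pos_of_pos hνpos ω
    have hε'β : ε' ≤ β/2 := min_le_left _ _
    have habs := abs_lt.mp hXY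
    have hXlow : β/2 ≤ X := by linarith
    have hlog1 : Real.log X - Real.log (ν^ω) ≤ 2*ε'/β := by
      rw [← Real.log_div hXpos.ne' hYpos.ne']
      calc Real.log (X/(ν^ω)) ≤ X/(ν^ω) - 1 := Real.log_le_sub_one_of_pos (by positivity)
        _ = (X - ν^ω)/(ν^ω) := by field_simp
        _ ≤ ε'/β := div_le_div₀ hε'pos.le (by linarith) hβpos hY
        _ ≤ 2*ε'/β := by
            have : 0 ≤ ε'/β := div_nonneg hε'pos.le hβpos.le
            have h2 : 2*ε'/β = ε'/β + ε'/β := by ring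
            linarith
    have hlog2 : Real.log (ν^ω) - Real.log X ≤ 2*ε'/β := by
      rw [← Real.log_div hYpos.ne' hXpos.ne']
      have hhalf : ε'/(β/2) = 2*ε'/β := by
        field_simp
      calc Real.log ((ν^ω)/X) ≤ (ν^ω)/X - 1 := Real.log_le_sub_one_of_pos (by positivity)
        _ = (ν^ω - X)/X := by field_simp
        _ ≤ ε'/(β/2) := div_le_div₀ hε'pos.le (by linarith) (by linarith) hXlow
        _ = 2*ε'/β := hhalf
    have habsXY : |Real.log X - Real.log (ν^ω)| ≤ 2*ε'/β :=
      abs_le.mpr ⟨by linarith, by linarith⟩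
    have hlogX : Real.log X = Real.log (c n) - Real.log (c q) :=
      Real.log_div hcn.ne' hcq.ne'
    have hlogY : Real.log (ν^ω) = ω * Real.log ν := Real.log_rpow hνpos ω
    -- bound |log ν - (log n - log q)| ≤ 1/p
    have hlogν₁ : Real.log n - Real.log q ≤ Real.log ν := by
      rw [← Real.log_div hnr.ne' hqr.ne']
      exact Real.log_le_log (by positivity) hνI.1
    have hlogν₂ : Real.log ν ≤ Real.log n - Real.log q + 1/p := by
      have h1 : Real.log ν ≤ Real.log (((n:ℝ)+1)/q) :=
        Real.log_le_log hνpos hνI.2.le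
      rw [Real.log_div (by positivity) hqr.ne'] at h1
      have h2 : Real.log ((n:ℝ)+1) ≤ Real.log n + 1/n := by
        have h3 : Real.log ((n:ℝ)+1) - Real.log n = Real.log (((n:ℝ)+1)/n) := by
          rw [Real.log_div (by positivity) hnr.ne']
        have h4 : Real.log (((n:ℝ)+1)/n) ≤ ((n:ℝ)+1)/n - 1 :=
          Real.log_le_sub_one_of_pos (by positivity)
        have h5 : ((n:ℝ)+1)/n - 1 = 1/n := by field_simp; ring
        linarith
      have h6 : 1/(n:ℝ) ≤ 1/p := by
        apply one_div_le_one_div_of_le hppos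
        exact_mod_cast hn1
      linarith
    have hB : |Real.log ν - (Real.log n - Real.log q)| ≤ 1/p :=
      abs_le.mpr ⟨by linarith [one_div_nonneg.mpr hppos.le], by linarith⟩
    have hsplit : Real.log (c n) - Real.log (c q) - ω * (Real.log n - Real.log q)
        = (Real.log X - Real.log (ν^ω)) + ω * (Real.log ν - (Real.log n - Real.log q)) := by
      rw [hlogX, hlogY]; ring
    rw [hsplit]
    calc |(Real.log X - Real.log (ν^ω)) + ω * (Real.log ν - (Real.log n - Real.log q))|
        ≤ |Real.log X - Real.log (ν^ω)| + |ω * (Real.log ν - (Real.log n - Real.log q))| :=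
          abs_add_le _ _
      _ ≤ 2*ε'/β + |ω| * (1/p) := by
          refine add_le_add habsXY ?_
          rw [abs_mul]
          exact mul_le_mul_of_nonneg_left hB (abs_nonneg ω)
  -- apply to m and p
  have hDm := key m νm hm1 hm2 hνm.1 hνm.2
  have hDp := key p νp le_rfl (by omega) hνp.1 hνp.2
  have hcomb : (Real.log (c m) - ω * Real.log m) - (Real.log (c p) - ω * Real.log p)
      = (Real.log (c m) - Real.log (c q) - ω * (Real.log m - Real.log q))
        - (Real.log (c p) - Real.log (c q) - ω * (Real.log p - Real.log q)) := by ring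
  rw [hcomb]
  have htri := abs_sub (Real.log (c m) - Real.log (c q) - ω * (Real.log m - Real.log q))
      (Real.log (c p) - Real.log (c q) - ω * (Real.log p - Real.log q))
  -- numeric conclusion
  have hε'2 : ε' ≤ ε*β/16 := min_le_right _ _
  have h4 : 4*ε'/β ≤ ε/4 := by
    rw [div_le_div_iff₀ hβpos (by norm_num : (0:ℝ) < 4)]
    nlinarith
  have h5 : |ω| * (1/(p:ℝ)) ≤ ε/4 := by
    rw [div_le_iff₀ hε] at hpε
    rw [mul_one_div, div_le_div_iff₀ hppos (by norm_num : (0:ℝ) < 4)]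
    nlinarith [abs_nonneg ω]
  calc |(Real.log (c m) - Real.log (c q) - ω * (Real.log m - Real.log q))
        - (Real.log (c p) - Real.log (c q) - ω * (Real.log p - Real.log q))|
      ≤ |Real.log (c m) - Real.log (c q) - ω * (Real.log m - Real.log q)|
        + |Real.log (c p) - Real.log (c q) - ω * (Real.log p - Real.log q)| := abs_sub _ _
    _ ≤ (2*ε'/β + |ω| * (1/p)) + (2*ε'/β + |ω| * (1/p)) := add_le_add hDm hDp
    _ = 4*ε'/β + 2*(|ω| * (1/(p:ℝ))) := by ring
    _ ≤ ε/4 + 2*(ε/4) := by linarith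
    _ ≤ ε := by linarith

/-- The log-linear dyadic interpolation of `s`. -/
noncomputable def bsu (s : ℕ → ℝ) (p : ℕ) : ℝ :=
  s (2^(Nat.log 2 p)) + (s (2^(Nat.log 2 p + 1)) - s (2^(Nat.log 2 p))) *
    ((Real.log p - Real.log ((2^(Nat.log 2 p) : ℕ) : ℝ)) / Real.log 2)

lemma bsu_sub (s : ℕ → ℝ) (p : ℕ) :
    bsu s p - s p = (s (2^(Nat.log 2 p)) - s p) +
      (s (2^(Nat.log 2 p + 1)) - s (2^(Nat.log 2 p))) *
        ((Real.log p - Real.log ((2^(Nat.log 2 p) : ℕ) : ℝ)) / Real.log 2) := by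
  simp only [bsu]; ring

lemma bsu_step (s : ℕ → ℝ) (p : ℕ) (hp : 1 ≤ p) :
    bsu s (p+1) - bsu s p
      = (s (2^(Nat.log 2 p + 1)) - s (2^(Nat.log 2 p))) *
        ((Real.log ((p:ℝ)+1) - Real.log p) / Real.log 2) := by
  have hk1 : 2^(Nat.log 2 p) ≤ p := Nat.pow_log_le_self 2 (by omega)
  have hk2 : p < 2^(Nat.log 2 p + 1) := Nat.lt_pow_succ_log_self (by norm_num) p
  have hcast : ((p+1 : ℕ) : ℝ) = (p:ℝ)+1 := by push_cast; ring
  rcases lt_or_eq_of_le (Nat.succ_le_of_lt hk2) with h | h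
  · have hlogk : Nat.log 2 (p+1) = Nat.log 2 p :=
      Nat.log_eq_of_pow_le_of_lt_pow (by omega) h
    simp only [bsu, hlogk, hcast]
    ring
  · have h' : p + 1 = 2^(Nat.log 2 p + 1) := h
    have hlogk : Nat.log 2 (p+1) = Nat.log 2 p + 1 := by
      rw [h']; exact Nat.log_pow (by norm_num) _
    simp only [bsu, hlogk]
    rw [← h', hcast]
    have hppos : (0:ℝ) < p := by exact_mod_cast (by omega : 0 < p)
    have h2kpos : (0:ℝ) < ((2^(Nat.log 2 p) : ℕ) : ℝ) := by positivity
    have hlp1 : Real.log ((p:ℝ)+1)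
        = Real.log 2 + Real.log ((2^(Nat.log 2 p) : ℕ) : ℝ) := by
      rw [← hcast, h']
      have h2 : ((2^(Nat.log 2 p + 1) : ℕ) : ℝ) = 2 * ((2^(Nat.log 2 p) : ℕ) : ℝ) := by
        push_cast; ring
      rw [h2, Real.log_mul (by norm_num) h2kpos.ne']
    rw [hlp1]
    field_simp
    ring

set_option maxHeartbeats 2000000 in
/-- Bojanic–Seneta: if `(c p)` is a sequence of positive reals which is regularly varying
of index `ω`, then there is a positive sequence `(b p)` with `b p / c p → 1` and
`b (p+1) / b p = 1 + ω/p + o(1/p)` as `p → ∞`. -/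
theorem stmt15 (c : ℕ → ℝ) (hc : ∀ p : ℕ, 1 ≤ p → 0 < c p) (ω : ℝ)
    (hrv : ∀ l : ℝ, 0 < l →
      Tendsto (fun p : ℕ => c ⌊l * p⌋₊ / c p) atTop (nhds (l ^ ω))) :
    ∃ b : ℕ → ℝ, (∀ p : ℕ, 1 ≤ p → 0 < b p) ∧
      Tendsto (fun p : ℕ => b p / c p) atTop (nhds 1) ∧
      Tendsto (fun p : ℕ => (b (p + 1) / b p - 1 - ω / p) * p) atTop (nhds 0) := by
  have uct := bs_uct c hc ω hrv
  set s : ℕ → ℝ := fun n => Real.log (c n) - ω * Real.log n with hsdef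
  set u : ℕ → ℝ := bsu s with hudef
  set b : ℕ → ℝ := fun p => if p = 0 then 1 else Real.exp (ω * Real.log p + u p) with hbdef
  have hlog2 : (0:ℝ) < Real.log 2 := Real.log_pos (by norm_num)
  -- `u p - s p → 0`
  have husp : Tendsto (fun p : ℕ => u p - s p) atTop (nhds 0) := by
    rw [Metric.tendsto_atTop]
    intro ε hε
    obtain ⟨N, hN1, hN⟩ := uct (ε/4) (by positivity)
    refine ⟨2*N + 2, ?_⟩
    intro p hp
    have hk1 : 2^(Nat.log 2 p) ≤ p := Nat.pow_log_le_self 2 (by omega)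
    have hk2 : p < 2^(Nat.log 2 p + 1) := Nat.lt_pow_succ_log_self (by norm_num) p
    have hpow : (2:ℕ)^(Nat.log 2 p + 1) = 2 * 2^(Nat.log 2 p) := by ring
    rw [hpow] at hk2
    have hkN : N ≤ 2^(Nat.log 2 p) := by omega
    have h1 : |s p - s (2^(Nat.log 2 p))| ≤ ε/4 := hN (2^(Nat.log 2 p)) hkN p hk1 (by omega)
    have h2 : |s (2^(Nat.log 2 p + 1)) - s (2^(Nat.log 2 p))| ≤ ε/4 :=
      hN (2^(Nat.log 2 p)) hkN (2^(Nat.log 2 p + 1)) (by omega) (by omega)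
    have hppos : (0:ℝ) < p := by exact_mod_cast (by omega : 0 < p)
    have h2kpos : (0:ℝ) < ((2^(Nat.log 2 p) : ℕ) : ℝ) := by positivity
    have htp0 : 0 ≤ (Real.log p - Real.log ((2^(Nat.log 2 p) : ℕ) : ℝ)) / Real.log 2 := by
      apply div_nonneg _ hlog2.le
      have : Real.log ((2^(Nat.log 2 p) : ℕ) : ℝ) ≤ Real.log p :=
        Real.log_le_log h2kpos (by exact_mod_cast hk1)
      linarith
    have htp1 : (Real.log p - Real.log ((2^(Nat.log 2 p) : ℕ) : ℝ)) / Real.log 2 ≤ 1 := by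
      rw [div_le_one hlog2]
      have hlogp : Real.log p ≤ Real.log ((2^(Nat.log 2 p + 1) : ℕ) : ℝ) := by
        apply Real.log_le_log hppos
        have : p ≤ 2^(Nat.log 2 p + 1) := by omega
        exact_mod_cast this
      have hsum : Real.log ((2^(Nat.log 2 p + 1) : ℕ) : ℝ)
          = Real.log 2 + Real.log ((2^(Nat.log 2 p) : ℕ) : ℝ) := by
        have heq : ((2^(Nat.log 2 p + 1) : ℕ) : ℝ) = 2 * ((2^(Nat.log 2 p) : ℕ) : ℝ) := by
          push_cast; ring
        rw [heq, Real.log_mul (by norm_num) h2kpos.ne']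
      linarith
    rw [Real.dist_eq, sub_zero, hudef, bsu_sub s p]
    calc |(s (2^(Nat.log 2 p)) - s p) + (s (2^(Nat.log 2 p + 1)) - s (2^(Nat.log 2 p))) *
          ((Real.log p - Real.log ((2^(Nat.log 2 p) : ℕ) : ℝ)) / Real.log 2)|
        ≤ |s (2^(Nat.log 2 p)) - s p| + |(s (2^(Nat.log 2 p + 1)) - s (2^(Nat.log 2 p))) *
          ((Real.log p - Real.log ((2^(Nat.log 2 p) : ℕ) : ℝ)) / Real.log 2)| := abs_add_le _ _
      _ ≤ ε/4 + ε/4 := by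
          refine add_le_add (by rw [abs_sub_comm]; exact h1) ?_
          rw [abs_mul]
          calc |s (2^(Nat.log 2 p + 1)) - s (2^(Nat.log 2 p))| *
                |(Real.log p - Real.log ((2^(Nat.log 2 p) : ℕ) : ℝ)) / Real.log 2|
              ≤ (ε/4) * 1 := by
                apply mul_le_mul h2 _ (abs_nonneg _) (by positivity)
                rw [abs_of_nonneg htp0]; exact htp1
            _ = ε/4 := by ring
      _ < ε := by linarith
  -- `(u (p+1) - u p) * p → 0`
  have hDelta : Tendsto (fun p : ℕ => (u (p+1) - u p) * p) atTop (nhds 0) := by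
    rw [Metric.tendsto_atTop]
    intro ε hε
    obtain ⟨N, hN1, hN⟩ := uct (ε/8) (by positivity)
    refine ⟨2*N + 2, ?_⟩
    intro p hp
    have hk1 : 2^(Nat.log 2 p) ≤ p := Nat.pow_log_le_self 2 (by omega)
    have hk2 : p < 2^(Nat.log 2 p + 1) := Nat.lt_pow_succ_log_self (by norm_num) p
    have hpow : (2:ℕ)^(Nat.log 2 p + 1) = 2 * 2^(Nat.log 2 p) := by ring
    rw [hpow] at hk2
    have hkN : N ≤ 2^(Nat.log 2 p) := by omega
    have h2 : |s (2^(Nat.log 2 p + 1)) - s (2^(Nat.log 2 p))| ≤ ε/8 :=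
      hN (2^(Nat.log 2 p)) hkN (2^(Nat.log 2 p + 1)) (by omega) (by omega)
    have hppos : (0:ℝ) < p := by exact_mod_cast (by omega : 0 < p)
    have hstep := bsu_step s p (by omega)
    rw [Real.dist_eq, sub_zero, hudef, hstep]
    have hlog01 : 0 ≤ Real.log ((p:ℝ)+1) - Real.log p := by
      have := Real.log_le_log hppos (by linarith : (p:ℝ) ≤ (p:ℝ)+1)
      linarith
    have hlogle : (Real.log ((p:ℝ)+1) - Real.log p) * p ≤ 1 := by
      have h3 : Real.log ((p:ℝ)+1) - Real.log p = Real.log (((p:ℝ)+1)/p) := by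
        rw [Real.log_div (by linarith) hppos.ne']
      have h4 : Real.log (((p:ℝ)+1)/p) ≤ ((p:ℝ)+1)/p - 1 :=
        Real.log_le_sub_one_of_pos (by positivity)
      have h5 : ((p:ℝ)+1)/p - 1 = 1/p := by field_simp; ring
      rw [h3]
      calc Real.log (((p:ℝ)+1)/p) * p ≤ (1/p) * p := by
            apply mul_le_mul_of_nonneg_right _ hppos.le
            rw [← h5]; exact h4
        _ = 1 := by field_simp
    have hfac0 : 0 ≤ ((Real.log ((p:ℝ)+1) - Real.log p) / Real.log 2) * p :=
      mul_nonneg (div_nonneg hlog01 hlog2.le) hppos.le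
    have hfac2 : ((Real.log ((p:ℝ)+1) - Real.log p) / Real.log 2) * p ≤ 2 := by
      have hl2 : (1:ℝ)/2 ≤ Real.log 2 := by
        have := Real.log_two_gt_d9; norm_num at this ⊢; linarith
      calc ((Real.log ((p:ℝ)+1) - Real.log p) / Real.log 2) * p
          = ((Real.log ((p:ℝ)+1) - Real.log p) * p) / Real.log 2 := by ring
        _ ≤ 1 / Real.log 2 := by gcongr
        _ ≤ 2 := by rw [div_le_iff₀ hlog2]; linarith
    calc |(s (2^(Nat.log 2 p + 1)) - s (2^(Nat.log 2 p))) *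
          ((Real.log ((p:ℝ)+1) - Real.log p) / Real.log 2) * p|
        = |s (2^(Nat.log 2 p + 1)) - s (2^(Nat.log 2 p))| *
          |((Real.log ((p:ℝ)+1) - Real.log p) / Real.log 2) * p| := by
          rw [mul_assoc, abs_mul]
      _ ≤ (ε/8) * 2 := by
          apply mul_le_mul h2 _ (abs_nonneg _) (by positivity)
          rw [abs_of_nonneg hfac0]; exact hfac2
      _ < ε := by linarith
  -- `p * (log (p+1) - log p) → 1`
  have hlogp : Tendsto (fun p : ℕ => (Real.log ((p:ℝ)+1) - Real.log p) * p) atTop (nhds 1) := by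
    have h0 : Tendsto (fun x : ℝ => x * Real.log (1 + 1/x)) atTop (nhds 1) := by
      simpa using Real.tendsto_mul_log_one_add_div_atTop 1
    have h1 : Tendsto (fun p : ℕ => (p:ℝ) * Real.log (1 + 1/(p:ℝ))) atTop (nhds 1) :=
      h0.comp tendsto_natCast_atTop_atTop
    apply h1.congr'
    filter_upwards [eventually_ge_atTop 1] with p hp
    have hppos : (0:ℝ) < p := by exact_mod_cast (by omega : 0 < p)
    have heq : (1:ℝ) + 1/p = ((p:ℝ)+1)/p := by field_simp
    rw [heq, Real.log_div (by positivity) hppos.ne']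
    ring
  set x : ℕ → ℝ := fun p => ω * (Real.log ((p:ℝ)+1) - Real.log p) + (u (p+1) - u p)
    with hxdef
  have hxp : Tendsto (fun p : ℕ => x p * p) atTop (nhds ω) := by
    have h1 := (hlogp.const_mul ω).add hDelta
    rw [mul_one, add_zero] at h1
    apply h1.congr
    intro p
    simp only [hxdef]
    ring
  have hx0 : Tendsto x atTop (nhds 0) := by
    have h1 := hxp.mul tendsto_one_div_atTop_nhds_zero_nat
    rw [mul_zero] at h1
    apply h1.congr'
    filter_upwards [eventually_ge_atTop 1] with p hp
    have hppos : ((p:ℝ)) ≠ 0 := by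
      have : (0:ℝ) < p := by exact_mod_cast (by omega : 0 < p)
      exact this.ne'
    field_simp
  refine ⟨b, ?_, ?_, ?_⟩
  · intro p hp
    rw [hbdef]
    simp only [if_neg (by omega : ¬ p = 0)]
    exact Real.exp_pos _
  · have hev : (fun p : ℕ => Real.exp (u p - s p)) =ᶠ[atTop] (fun p : ℕ => b p / c p) := by
      filter_upwards [eventually_ge_atTop 1] with p hp
      have h1 : b p / c p = Real.exp (ω * Real.log p + u p - Real.log (c p)) := by
        rw [hbdef]
        simp only [if_neg (by omega : ¬ p = 0)]
        rw [Real.exp_sub]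
        congr 2
        exact (Real.exp_log (hc p hp)).symm
      rw [h1]
      congr 1
      simp only [hsdef]
      ring
    have h2 := (Real.continuous_exp.tendsto 0).comp husp
    rw [Real.exp_zero] at h2
    exact h2.congr' hev
  · have hev : (fun p : ℕ => (x p * p - ω) + (Real.exp (x p) - 1 - x p) * p)
        =ᶠ[atTop] (fun p : ℕ => (b (p + 1) / b p - 1 - ω / p) * p) := by
      filter_upwards [eventually_ge_atTop 1] with p hp
      have hp0 : ((p:ℝ)) ≠ 0 := by
        have : (0:ℝ) < p := by exact_mod_cast (by omega : 0 < p)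
        exact this.ne'
      have hb1 : b (p+1) / b p = Real.exp (x p) := by
        rw [hbdef]
        simp only [if_neg (by omega : ¬ p = 0), if_neg (by omega : ¬ p + 1 = 0)]
        rw [← Real.exp_sub]
        congr 1
        simp only [hxdef]
        push_cast
        ring
      rw [hb1]
      field_simp
      ring
    have h1 : Tendsto (fun p : ℕ => x p * p - ω) atTop (nhds 0) := by
      have := hxp.sub_const ω
      rwa [sub_self] at this
    have hx1 : ∀ᶠ p : ℕ in atTop, |x p| ≤ 1 := by
      have h3 := Metric.tendsto_atTop.mp hx0 1 one_pos
      obtain ⟨M, hM⟩ := h3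
      rw [eventually_atTop]
      exact ⟨M, fun p hp => by
        have := hM p hp
        rw [Real.dist_eq, sub_zero] at this
        linarith⟩
    have hg : Tendsto (fun p : ℕ => |x p * p| * |x p|) atTop (nhds 0) := by
      have h4 := hxp.abs.mul hx0.abs
      rwa [abs_zero, mul_zero] at h4
    have h2 : Tendsto (fun p : ℕ => (Real.exp (x p) - 1 - x p) * p) atTop (nhds 0) := by
      apply squeeze_zero_norm' _ hg
      filter_upwards [hx1] with p hxp1
      rw [Real.norm_eq_abs]
      calc |(Real.exp (x p) - 1 - x p) * p|
          = |Real.exp (x p) - 1 - x p| * |(p:ℝ)| := abs_mul _ _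
        _ ≤ x p^2 * |(p:ℝ)| :=
            mul_le_mul_of_nonneg_right (Real.abs_exp_sub_one_sub_id_le hxp1) (abs_nonneg _)
        _ = |x p * p| * |x p| := by rw [abs_mul, ← sq_abs (x p)]; ring
    have hmain := h1.add h2
    rw [add_zero] at hmain
    exact hmain.congr' hev
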